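/- On EuclideanSpace ℝ (Fin 4), let D(x) = (x 0)² − (x 1)² − (x 2)² − (x 3)² and let f(x) = log √(D(x)), defined on the open set U = {x : D(x) > 0 and x 0 > 0}. Then for every x ∈ U, the gradient of f at x is the vector y with y 0 = x 0 / D(x) and y i = −(x i) / D(x) for i = 1, 2, 3; that is, the gradient of log 𝔲 at x equals the spin factor inverse of x (identifying x with (x 0, (x 1, x 2, x 3)) ∈ ℝ × ℝ³). -/

import Mathlib

noncomputable def lorentzD (x : EuclideanSpace ℝ (Fin 4)) : ℝ :=
  (x 0) ^ 2 - (x 1) ^ 2 - (x 2) ^ 2 - (x 3) ^ 2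

open InnerProductSpace
theorem gradient_log_unitalNorm (x : EuclideanSpace ℝ (Fin 4))
    (hD : 0 < lorentzD x) (hx0 : 0 < x 0) :
    (gradient (fun y => Real.log (Real.sqrt (lorentzD y))) x) 0 = x 0 / lorentzD x ∧
    ∀ i : Fin 4, i ≠ 0 →
      (gradient (fun y => Real.log (Real.sqrt (lorentzD y))) x) i = -(x i) / lorentzD x := by
  have hD' : lorentzD x ≠ 0 := ne_of_gt hD
  have hp : ∀ i : Fin 4, HasFDerivAt (𝕜 := ℝ) (E := EuclideanSpace ℝ (Fin 4)) (F := ℝ)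
      (fun y => y i) (PiLp.proj 2 (fun _ : Fin 4 => ℝ) i) x := by
    intro i
    exact (PiLp.proj (𝕜 := ℝ) 2 (fun _ : Fin 4 => ℝ) i).hasFDerivAt
  set p : Fin 4 → (EuclideanSpace ℝ (Fin 4) →L[ℝ] ℝ) :=
    fun i => PiLp.proj 2 (fun _ : Fin 4 => ℝ) i with hp_def
  set L : EuclideanSpace ℝ (Fin 4) →L[ℝ] ℝ :=
    (((x 0 • p 0 + x 0 • p 0) - (x 1 • p 1 + x 1 • p 1))
      - (x 2 • p 2 + x 2 • p 2)) - (x 3 • p 3 + x 3 • p 3) with hLdef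
  have hL : HasFDerivAt lorentzD L x := by
    have heq : lorentzD = fun y : EuclideanSpace ℝ (Fin 4) =>
        ((y 0 * y 0 - y 1 * y 1) - y 2 * y 2) - y 3 * y 3 := by
      funext y; simp [lorentzD, sq]
    rw [heq]
    exact ((((hp 0).mul (hp 0)).sub ((hp 1).mul (hp 1))).sub
      ((hp 2).mul (hp 2))).sub ((hp 3).mul (hp 3))
  have hs : HasDerivAt (fun t => Real.log (Real.sqrt t)) (1 / (2 * lorentzD x)) (lorentzD x) := by
    have h1 := Real.hasDerivAt_sqrt hD'
    have h2 := Real.hasDerivAt_log (Real.sqrt_ne_zero'.mpr hD)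
    have h3 := h2.comp (lorentzD x) h1
    convert h3 using 1
    have hss : Real.sqrt (lorentzD x) * Real.sqrt (lorentzD x) = lorentzD x :=
      Real.mul_self_sqrt hD.le
    have hs0 : Real.sqrt (lorentzD x) ≠ 0 := Real.sqrt_ne_zero'.mpr hD
    case e'_9 => rw [inv_mul_eq_div, div_div, mul_assoc, Real.mul_self_sqrt hD.le]
    all_goals rfl
  have hf := hs.comp_hasFDerivAt x hL
  have hg : HasGradientAt (fun y => Real.log (Real.sqrt (lorentzD y)))
      ((toDual ℝ _).symm ((1 / (2 * lorentzD x)) • L)) x := hf.hasGradientAt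
  have hgrad := hg.gradient
  have hcomp : ∀ i : Fin 4,
      (gradient (fun y => Real.log (Real.sqrt (lorentzD y))) x) i
        = ((1 / (2 * lorentzD x)) • L) (EuclideanSpace.single i 1) := by
    intro i
    rw [hgrad]
    have h1 : ⟪((toDual ℝ _).symm ((1 / (2 * lorentzD x)) • L) : EuclideanSpace ℝ (Fin 4)),
        EuclideanSpace.single i 1⟫_ℝ = ((1 / (2 * lorentzD x)) • L) (EuclideanSpace.single i 1) :=
      toDual_symm_apply
    rw [real_inner_comm, EuclideanSpace.inner_single_left] at h1
    simpa using h1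
  have hLapp : ∀ i : Fin 4, L (EuclideanSpace.single i 1)
      = 2 * x 0 * (EuclideanSpace.single i 1 : EuclideanSpace ℝ (Fin 4)) 0
        - 2 * x 1 * (EuclideanSpace.single i 1 : EuclideanSpace ℝ (Fin 4)) 1
        - 2 * x 2 * (EuclideanSpace.single i 1 : EuclideanSpace ℝ (Fin 4)) 2
        - 2 * x 3 * (EuclideanSpace.single i 1 : EuclideanSpace ℝ (Fin 4)) 3 := by
    intro i
    simp only [hLdef, hp_def, ContinuousLinearMap.sub_apply, ContinuousLinearMap.add_apply,
      ContinuousLinearMap.smul_apply, PiLp.proj_apply, smul_eq_mul]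
    ring
  constructor
  · rw [hcomp 0]
    simp only [ContinuousLinearMap.smul_apply, smul_eq_mul, hLapp 0,
      EuclideanSpace.single_apply]
    simp
    field_simp
  · intro i hi
    rw [hcomp i]
    simp only [ContinuousLinearMap.smul_apply, smul_eq_mul, hLapp i,
      EuclideanSpace.single_apply]
    fin_cases i
    · exact absurd rfl hi
    all_goals
      simp
      field_simp
      try ring
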